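/- arXiv:2506.08307 — 4 statements merged into one kernel-verified Lean document; each statement's English description precedes it below -/
import Mathlib

section
/- Let n > 1, k ≥ 3, and let g_1, …, g_n ∈ C_0^k(M^n, 𝔸) have compact support. If there exists f ∈ C^k(M^n, 𝔸) with compact support such that ∂̄_j f = g_j on M^n for j = 1, …, n, then ∂̄_i(∂_j g_j) = Δ_j g_i on M^n for all i, j ∈ {1, …, n}. -/
open MeasureTheory

noncomputable section

/-- A real alternative `*`-algebra of finite dimension `> 1`, with a fixed
hypercomplex basis `v 0 = 1, v 1, …, v m` spanning the hypercomplex subspace `M`.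
Multiplication is `ℝ`-bilinear (bundled as a linear map). -/
structure HCAlg (𝔸 : Type) [NormedAddCommGroup 𝔸] [NormedSpace ℝ 𝔸] (m : ℕ) : Type where
  mul : 𝔸 →ₗ[ℝ] 𝔸 →ₗ[ℝ] 𝔸
  one : 𝔸
  conj : 𝔸 →ₗ[ℝ] 𝔸
  findim : FiniteDimensional ℝ 𝔸
  dim_gt_one : 1 < Module.finrank ℝ 𝔸
  one_mul' : ∀ a, mul one a = a
  mul_one' : ∀ a, mul a one = a
  alt_left : ∀ a b, mul a (mul a b) = mul (mul a a) b
  alt_right : ∀ a b, mul (mul b a) a = mul b (mul a a)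
  conj_invol : ∀ a, conj (conj a) = a
  conj_mul' : ∀ a b, conj (mul a b) = mul (conj b) (conj a)
  conj_one : conj one = one
  hm : 1 ≤ m
  v : Fin (m + 1) → 𝔸
  v_indep : LinearIndependent ℝ v
  v_zero : v 0 = one
  v_trace : ∀ s, s ≠ 0 → v s + conj (v s) = 0
  v_norm : ∀ s, s ≠ 0 → mul (v s) (conj (v s)) = one
  v_anticomm : ∀ s t, s ≠ 0 → t ≠ 0 → s ≠ t → mul (v s) (v t) = -(mul (v t) (v s))

variable {𝔸 : Type} [NormedAddCommGroup 𝔸] [NormedSpace ℝ 𝔸] {m n : ℕ}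

/-- `M^n`, identified with `ℝ^{(m+1)n}` via the coordinates `x j s`. -/
abbrev Mn (n m : ℕ) := Fin n → Fin (m + 1) → ℝ

/-- Euclidean norm of a point of `M` (in coordinates). -/
def enormM (c : Fin (m + 1) → ℝ) : ℝ := Real.sqrt (∑ s, c s ^ 2)

/-- Euclidean norm of a point of `M^n` (in coordinates). -/
def enormMn (x : Mn n m) : ℝ := Real.sqrt (∑ j, ∑ s, x j s ^ 2)

/-- Partial derivative `∂f/∂x_{j,s}` for functions on `M^n`. -/
def pd {E : Type} [NormedAddCommGroup E] [NormedSpace ℝ E]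
    (f : Mn n m → E) (j : Fin n) (s : Fin (m + 1)) (x : Mn n m) : E :=
  fderiv ℝ f x (Pi.single j (Pi.single s 1))

/-- Partial derivative `∂f/∂x_s` for functions on `M`. -/
def pd1 {E : Type} [NormedAddCommGroup E] [NormedSpace ℝ E]
    (f : (Fin (m + 1) → ℝ) → E) (s : Fin (m + 1)) (x : Fin (m + 1) → ℝ) : E :=
  fderiv ℝ f x (Pi.single s 1)

/-- The Dirac (Cauchy–Riemann) operator `∂̄_j = ∑_s v_s ∂/∂x_{j,s}`. -/
def dbar (H : HCAlg 𝔸 m) (f : Mn n m → 𝔸) (j : Fin n) (x : Mn n m) : 𝔸 :=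
  ∑ s, H.mul (H.v s) (pd f j s x)

/-- The conjugated Dirac operator `∂_j = ∑_s v_s^c ∂/∂x_{j,s}`. -/
def dconj (H : HCAlg 𝔸 m) (f : Mn n m → 𝔸) (j : Fin n) (x : Mn n m) : 𝔸 :=
  ∑ s, H.mul (H.conj (H.v s)) (pd f j s x)

/-- The Laplacian `Δ_j = ∑_s ∂²/∂x_{j,s}²` in the `j`-th block of variables. -/
def lap {E : Type} [NormedAddCommGroup E] [NormedSpace ℝ E]
    (f : Mn n m → E) (j : Fin n) (x : Mn n m) : E :=
  ∑ s, pd (pd f j s) j s x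

/-- Surface area of the unit `(N-1)`-sphere in `ℝ^N`: `σ_N = 2 π^{N/2} / Γ(N/2)`. -/
def usigma (N : ℕ) : ℝ := 2 * Real.pi ^ ((N : ℝ) / 2) / Real.Gamma ((N : ℝ) / 2)

/-- Embedding of coordinates into the hypercomplex subspace `M ⊆ 𝔸`. -/
def embM (H : HCAlg 𝔸 m) (c : Fin (m + 1) → ℝ) : 𝔸 := ∑ s, c s • H.v s

/-- The Cauchy kernel `E(x) = σ_{m+1}⁻¹ x^c / |x|^{m+1}` on `M`. -/
def CauchyE (H : HCAlg 𝔸 m) (c : Fin (m + 1) → ℝ) : 𝔸 :=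
  (usigma (m + 1) * enormM c ^ (m + 1))⁻¹ • H.conj (embM H c)

/-- The Bochner–Martinelli kernel components `K_j(x) = σ_N⁻¹ x_j^c / |x|^N`, `N = (m+1)n`. -/
def Kker (H : HCAlg 𝔸 m) (n : ℕ) (j : Fin n) (x : Mn n m) : 𝔸 :=
  (usigma ((m + 1) * n) * enormMn x ^ ((m + 1) * n))⁻¹ • H.conj (embM H (x j))

/-- `Tsol g (x) = −∫_M E(y₁ − x₁) (g(y₁, x⁰)) dV(y₁)`. -/
def Tsol (H : HCAlg 𝔸 m) (hn : 0 < n) (g : Mn n m → 𝔸) (x : Mn n m) : 𝔸 :=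
  - ∫ y1 : Fin (m + 1) → ℝ,
      H.mul (CauchyE H (y1 - x ⟨0, hn⟩)) (g (Function.update x ⟨0, hn⟩ y1))

/-- `Fint g (x) = ∫_M E(y₁) (g(y₁ + x₁, x⁰)) dV(y₁)`. -/
def Fint (H : HCAlg 𝔸 m) (hn : 0 < n) (g : Mn n m → 𝔸) (x : Mn n m) : 𝔸 :=
  ∫ y1 : Fin (m + 1) → ℝ,
      H.mul (CauchyE H y1) (g (Function.update x ⟨0, hn⟩ (y1 + x ⟨0, hn⟩)))


/-! ### Auxiliary lemmas -/

section Aux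

variable {E : Type} [NormedAddCommGroup E] [NormedSpace ℝ E]

lemma pd_congr {f g : Mn n m → E} (h : ∀ x, f x = g x) (j : Fin n) (s : Fin (m+1)) (x : Mn n m) :
    pd f j s x = pd g j s x := by
  have : f = g := funext h
  rw [this]

lemma pd_contDiff {k k' : WithTop ℕ∞} {f : Mn n m → E} (hf : ContDiff ℝ k f)
    (h : k' + 1 ≤ k) (j : Fin n) (s : Fin (m+1)) : ContDiff ℝ k' (pd f j s) := by
  have h1 : ContDiff ℝ k' (fderiv ℝ f) := hf.fderiv_right h
  exact (ContinuousLinearMap.apply ℝ E (Pi.single j (Pi.single s 1) : Mn n m)).contDiff.comp h1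

lemma pd_clm {F : Type} [NormedAddCommGroup F] [NormedSpace ℝ F]
    (T : E →L[ℝ] F) {f : Mn n m → E} {x : Mn n m} (hf : DifferentiableAt ℝ f x)
    (j : Fin n) (s : Fin (m+1)) :
    pd (fun y => T (f y)) j s x = T (pd f j s x) := by
  unfold pd
  rw [show (fun y => T (f y)) = T ∘ f from rfl, fderiv_comp x T.differentiableAt hf]
  simp

lemma pd_sum {ι : Type} (u : Finset ι) (F : ι → Mn n m → E) {x : Mn n m}
    (h : ∀ i ∈ u, DifferentiableAt ℝ (F i) x) (j : Fin n) (s : Fin (m+1)) :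
    pd (fun y => ∑ i ∈ u, F i y) j s x = ∑ i ∈ u, pd (F i) j s x := by
  unfold pd
  rw [fderiv_fun_sum h]
  simp

lemma pd_swap {f : Mn n m → E} (hf : ContDiff ℝ 2 f) (i j : Fin n)
    (s t : Fin (m+1)) (x : Mn n m) :
    pd (pd f j s) i t x = pd (pd f i t) j s x := by
  have hsym : IsSymmSndFDerivAt ℝ f x := hf.contDiffAt.isSymmSndFDerivAt (by norm_num)
  have hd1 : ContDiff ℝ 1 (fderiv ℝ f) := hf.fderiv_right (by norm_num)
  have key : ∀ (a : Fin n) (b : Fin (m+1)) (c : Fin n) (d : Fin (m+1)),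
      pd (pd f a b) c d x
        = fderiv ℝ (fderiv ℝ f) x (Pi.single c (Pi.single d 1)) (Pi.single a (Pi.single b 1)) := by
    intro a b c d
    rw [show pd (pd f a b) c d x = pd (fun y =>
        (ContinuousLinearMap.apply ℝ E (Pi.single a (Pi.single b 1) : Mn n m)) (fderiv ℝ f y)) c d x
      from rfl]
    rw [pd_clm _ (hd1.differentiable one_ne_zero x)]
    rfl
  rw [key, key, hsym]

end Aux

section AuxAlg

variable (H : HCAlg 𝔸 m)

/-- `H.mul a` as a continuous linear map. -/
def Lc (a : 𝔸) : 𝔸 →L[ℝ] 𝔸 :=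
  haveI := H.findim
  LinearMap.toContinuousLinearMap (H.mul a)

lemma lin_alt (x y a : 𝔸) :
    H.mul x (H.mul y a) + H.mul y (H.mul x a)
      = H.mul (H.mul x y) a + H.mul (H.mul y x) a := by
  have h := H.alt_left (x + y) a
  simp only [map_add, LinearMap.add_apply] at h
  have hx := H.alt_left x a
  have hy := H.alt_left y a
  rw [hx, hy] at h
  have h' : (H.mul x (H.mul y a) + H.mul y (H.mul x a))
        + (H.mul (H.mul x x) a + H.mul (H.mul y y) a)
      = (H.mul (H.mul x y) a + H.mul (H.mul y x) a)
        + (H.mul (H.mul x x) a + H.mul (H.mul y y) a) := by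
    refine Eq.trans ?_ (h.trans ?_) <;> abel
  exact add_right_cancel h'

lemma conj_v_ne {s : Fin (m+1)} (hs : s ≠ 0) : H.conj (H.v s) = -(H.v s) :=
  eq_neg_of_add_eq_zero_right (H.v_trace s hs)

lemma vv_self {s : Fin (m+1)} (hs : s ≠ 0) :
    H.mul (H.v s) (H.v s) = -H.one := by
  have h := H.v_norm s hs
  rw [conj_v_ne H hs, map_neg] at h
  rw [neg_eq_iff_eq_neg] at h
  exact h

lemma diag_term (s : Fin (m+1)) (a : 𝔸) :
    H.mul (H.conj (H.v s)) (H.mul (H.v s) a) = a := by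
  by_cases hs : s = 0
  · subst hs; rw [H.v_zero, H.conj_one, H.one_mul', H.one_mul']
  · rw [conj_v_ne H hs, map_neg, LinearMap.neg_apply, H.alt_left, vv_self H hs,
      map_neg, LinearMap.neg_apply, H.one_mul', neg_neg]

lemma offdiag_term {t u : Fin (m+1)} (htu : t ≠ u) (a : 𝔸) :
    H.mul (H.conj (H.v t)) (H.mul (H.v u) a)
      + H.mul (H.conj (H.v u)) (H.mul (H.v t) a) = 0 := by
  by_cases ht : t = 0
  · subst ht
    have hu : u ≠ 0 := fun h => htu h.symm
    rw [H.v_zero, H.conj_one, H.one_mul', conj_v_ne H hu, H.one_mul', map_neg,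
      LinearMap.neg_apply]
    exact add_neg_cancel _
  · by_cases hu : u = 0
    · subst hu
      rw [H.v_zero, H.conj_one, H.one_mul', conj_v_ne H ht, H.one_mul', map_neg,
        LinearMap.neg_apply]
      exact neg_add_cancel _
    · rw [conj_v_ne H ht, conj_v_ne H hu, map_neg, map_neg, LinearMap.neg_apply,
        LinearMap.neg_apply, ← neg_add, lin_alt H (H.v t) (H.v u) a,
        H.v_anticomm t u ht hu htu]
      simp

lemma alg_sum (A : Fin (m+1) → Fin (m+1) → 𝔸)
    (hA : ∀ t u, A t u = A u t) :
    ∑ t, ∑ u, H.mul (H.conj (H.v t)) (H.mul (H.v u) (A t u)) = ∑ s, A s s := by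
  set B : Fin (m+1) → Fin (m+1) → 𝔸 :=
    fun t u => H.mul (H.conj (H.v t)) (H.mul (H.v u) (A t u)) with hB
  have hoff : ∀ t u, t ≠ u → B t u + B u t = 0 := by
    intro t u htu
    have h0 := offdiag_term H htu (A t u)
    rw [hB]; dsimp only
    rw [hA u t]
    exact h0
  have hdiag : ∀ s, B s s = A s s := fun s => diag_term H s (A s s)
  have h2 : (∑ t, ∑ u, B t u) + (∑ t, ∑ u, B t u) = (∑ s, A s s) + (∑ s, A s s) := by
    conv_lhs => rw [show (∑ t, ∑ u, B t u) + (∑ t, ∑ u, B t u)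
      = (∑ t, ∑ u, B t u) + (∑ u, ∑ t, B t u) from by rw [Finset.sum_comm]]
    rw [← Finset.sum_add_distrib]
    have hrow : ∀ t : Fin (m+1), ((∑ u, B t u) + ∑ u, B u t) = A t t + A t t := by
      intro t
      rw [← Finset.sum_add_distrib]
      rw [Finset.sum_eq_single t]
      · rw [hdiag]
      · intro u _ hut; exact hoff t u (fun h => hut h.symm)
      · intro h; exact absurd (Finset.mem_univ t) h
    rw [Finset.sum_congr rfl (fun t _ => hrow t), Finset.sum_add_distrib]
  apply smul_right_injective 𝔸 (two_ne_zero (α := ℝ))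
  show (2:ℝ) • _ = (2:ℝ) • _
  rw [two_smul, two_smul]
  exact h2

end AuxAlg

section AuxAnal

variable (H : HCAlg 𝔸 m)

lemma dconj_dbar {f : Mn n m → 𝔸} (hf : ContDiff ℝ 2 f)
    (j : Fin n) (x : Mn n m) : dconj H (dbar H f j) j x = lap f j x := by
  have hpdC1 : ∀ (u : Fin (m+1)), ContDiff ℝ 1 (pd f j u) :=
    fun u => pd_contDiff hf (by norm_num) j u
  have hsum : ∀ t, pd (dbar H f j) j t x
      = ∑ u, H.mul (H.v u) (pd (pd f j u) j t x) := by
    intro t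
    have hd : dbar H f j = fun y => ∑ u, Lc H (H.v u) (pd f j u y) := rfl
    rw [hd, pd_sum Finset.univ (fun u y => Lc H (H.v u) (pd f j u y))
        (fun u _ => (Lc H (H.v u)).differentiableAt.comp x
        ((hpdC1 u).differentiable one_ne_zero x)) j t]
    exact Finset.sum_congr rfl
      (fun u _ => pd_clm (Lc H (H.v u)) ((hpdC1 u).differentiable one_ne_zero x) j t)
  unfold dconj
  rw [Finset.sum_congr rfl (fun t _ => by rw [hsum t, map_sum])]
  exact alg_sum H (fun t u => pd (pd f j u) j t x)
    (fun t u => pd_swap hf j j u t x)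

lemma dbar_lap {f : Mn n m → 𝔸} (hf : ContDiff ℝ 3 f)
    (i j : Fin n) (x : Mn n m) : dbar H (lap f j) i x = lap (dbar H f i) j x := by
  have hf2 : ContDiff ℝ 2 f := hf.of_le (by norm_num)
  have hpd2 : ∀ (a : Fin n) (b : Fin (m+1)), ContDiff ℝ 2 (pd f a b) :=
    fun a b => pd_contDiff hf (by norm_num) a b
  have hpd1 : ∀ a b c d, ContDiff ℝ 1 (pd (pd f a b) c d) :=
    fun a b c d => pd_contDiff (hpd2 a b) (by norm_num) c d
  have hpdlap : ∀ s, pd (lap f j) i s x = ∑ t, pd (pd (pd f j t) j t) i s x := by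
    intro s
    have hl : lap f j = fun y => ∑ t, pd (pd f j t) j t y := rfl
    rw [hl, pd_sum _ _ (fun t _ => (hpd1 j t j t).differentiable one_ne_zero x) i s]
  have hL : dbar H (lap f j) i x
      = ∑ s, ∑ t, H.mul (H.v s) (pd (pd (pd f j t) j t) i s x) := by
    unfold dbar
    exact Finset.sum_congr rfl (fun s _ => by rw [hpdlap s, map_sum])
  have hinner : ∀ t (y : Mn n m), pd (dbar H f i) j t y
      = ∑ s, H.mul (H.v s) (pd (pd f i s) j t y) := by
    intro t y
    have hd : dbar H f i = fun y => ∑ s, Lc H (H.v s) (pd f i s y) := rfl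
    rw [hd, pd_sum Finset.univ (fun s y => Lc H (H.v s) (pd f i s y))
        (fun s _ => (Lc H (H.v s)).differentiableAt.comp y
        (((hpd2 i s).differentiable (by norm_num)) y)) j t]
    exact Finset.sum_congr rfl
      (fun s _ => pd_clm _ (((hpd2 i s).differentiable (by norm_num)) y) j t)
  have hR : lap (dbar H f i) j x
      = ∑ t, ∑ s, H.mul (H.v s) (pd (pd (pd f i s) j t) j t x) := by
    unfold lap
    refine Finset.sum_congr rfl (fun t _ => ?_)
    rw [pd_congr (hinner t) j t x]
    have hc : (fun y => ∑ s, H.mul (H.v s) (pd (pd f i s) j t y))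
        = fun y => ∑ s, Lc H (H.v s) (pd (pd f i s) j t y) := rfl
    rw [hc, pd_sum Finset.univ (fun s y => Lc H (H.v s) (pd (pd f i s) j t y))
        (fun s _ => (Lc H (H.v s)).differentiableAt.comp x
        ((hpd1 i s j t).differentiable one_ne_zero x)) j t]
    exact Finset.sum_congr rfl
      (fun s _ => pd_clm _ ((hpd1 i s j t).differentiable one_ne_zero x) j t)
  rw [hL, hR, Finset.sum_comm]
  refine Finset.sum_congr rfl (fun s _ => Finset.sum_congr rfl (fun t _ => ?_))
  congr 1
  rw [pd_swap (hpd2 j s) i j s t x]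
  exact pd_congr (fun y => pd_swap hf2 i j s t y) j s x

end AuxAnal

/-- (i) ⇒ (iii) of Theorem 5.2: if the system `∂̄_j f = g_j` has a compactly supported
`C^k` solution, then `∂̄_i (∂_j g_j) = Δ_j g_i` on `M^n` for all `i, j`. -/
theorem solution_implies_compat (H : HCAlg 𝔸 m) (hn : 1 < n) (k : ℕ) (hk : 3 ≤ k)
    (g : Fin n → Mn n m → 𝔸)
    (hg : ∀ j, ContDiff ℝ k (g j)) (hgs : ∀ j, HasCompactSupport (g j))
    (f : Mn n m → 𝔸) (hf : ContDiff ℝ k f) (hfs : HasCompactSupport f)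
    (hsol : ∀ (j : Fin n) (x : Mn n m), dbar H f j x = g j x) :
    ∀ (i j : Fin n) (x : Mn n m), dbar H (dconj H (g j) j) i x = lap (g i) j x := by
  intro i j x
  have hf3 : ContDiff ℝ 3 f := hf.of_le (by exact_mod_cast hk)
  have hgj : g j = dbar H f j := funext fun y => (hsol j y).symm
  have hgi : g i = dbar H f i := funext fun y => (hsol i y).symm
  rw [hgj, hgi]
  have h1 : dconj H (dbar H f j) j = lap f j :=
    funext fun y => dconj_dbar H (hf3.of_le (by norm_num)) j y
  rw [h1]
  exact dbar_lap H hf3 i j x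

end
end

section
/- The Cauchy kernel E(x) = σ_{m+1}^{−1} x^c / |x|^{m+1} is both left and right monogenic on M ∖ {0}: for every x ∈ M ∖ {0}, ∑_{s=0}^m v_s (∂E/∂x_s)(x) = 0 and ∑_{s=0}^m (∂E/∂x_s)(x) v_s = 0. -/
open MeasureTheory

noncomputable section

variable {𝔸 : Type} [NormedAddCommGroup 𝔸] [NormedSpace ℝ 𝔸] {m n : ℕ}

/-! ### Auxiliary lemmas for Example 3.1 -/

lemma HCAlg.conj_v (H : HCAlg 𝔸 m) {s : Fin (m + 1)} (hs : s ≠ 0) :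
    H.conj (H.v s) = -(H.v s) :=
  (eq_neg_of_add_eq_zero_right (H.v_trace s hs))

lemma HCAlg.vconjv (H : HCAlg 𝔸 m) (s : Fin (m + 1)) :
    H.mul (H.v s) (H.conj (H.v s)) = H.one := by
  by_cases hs : s = 0
  · subst hs; rw [H.v_zero, H.conj_one, H.one_mul']
  · exact H.v_norm s hs

lemma HCAlg.vv_neg (H : HCAlg 𝔸 m) {s : Fin (m + 1)} (hs : s ≠ 0) :
    H.mul (H.v s) (H.v s) = -H.one := by
  have h1 : H.v s = -(H.conj (H.v s)) := by rw [H.conj_v hs, neg_neg]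
  calc H.mul (H.v s) (H.v s) = H.mul (H.v s) (-(H.conj (H.v s))) := by rw [← h1]
    _ = -(H.mul (H.v s) (H.conj (H.v s))) := map_neg _ _
    _ = -H.one := by rw [H.v_norm s hs]

lemma HCAlg.conjvv (H : HCAlg 𝔸 m) (s : Fin (m + 1)) :
    H.mul (H.conj (H.v s)) (H.v s) = H.one := by
  by_cases hs : s = 0
  · subst hs; rw [H.v_zero, H.conj_one, H.one_mul']
  · rw [H.conj_v hs, map_neg, LinearMap.neg_apply, H.vv_neg hs, neg_neg]

lemma HCAlg.pairL (H : HCAlg 𝔸 m) (s t : Fin (m + 1)) :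
    H.mul (H.v s) (H.conj (H.v t)) + H.mul (H.v t) (H.conj (H.v s)) =
      if s = t then (2 : ℝ) • H.one else 0 := by
  by_cases hst : s = t
  · subst hst; rw [if_pos rfl, H.vconjv, two_smul]
  · rw [if_neg hst]
    by_cases hs : s = 0
    · subst hs
      have ht : t ≠ 0 := fun h => hst h.symm
      rw [H.v_zero, H.conj_one, H.one_mul', H.mul_one', add_comm]
      exact H.v_trace t ht
    · by_cases ht : t = 0
      · subst ht
        rw [H.v_zero, H.conj_one, H.mul_one', H.one_mul']
        exact H.v_trace s hs
      · rw [H.conj_v hs, H.conj_v ht, map_neg, map_neg,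
          H.v_anticomm s t hs ht hst]
        abel

lemma HCAlg.pairR (H : HCAlg 𝔸 m) (s t : Fin (m + 1)) :
    H.mul (H.conj (H.v s)) (H.v t) + H.mul (H.conj (H.v t)) (H.v s) =
      if s = t then (2 : ℝ) • H.one else 0 := by
  by_cases hst : s = t
  · subst hst; rw [if_pos rfl, H.conjvv, two_smul]
  · rw [if_neg hst]
    by_cases hs : s = 0
    · subst hs
      have ht : t ≠ 0 := fun h => hst h.symm
      rw [H.v_zero, H.conj_one, H.one_mul', H.mul_one']
      exact H.v_trace t ht
    · by_cases ht : t = 0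
      · subst ht
        rw [H.v_zero, H.conj_one, H.mul_one', H.one_mul', add_comm]
        exact H.v_trace s hs
      · rw [H.conj_v hs, H.conj_v ht, map_neg, map_neg, LinearMap.neg_apply,
          LinearMap.neg_apply, H.v_anticomm s t hs ht hst]
        abel

lemma sum_pair_aux {E : Type} [NormedAddCommGroup E] [NormedSpace ℝ E]
    (a : Fin (m + 1) → ℝ) (f : Fin (m + 1) → Fin (m + 1) → E) (c : E)
    (hf : ∀ s t, f s t + f t s = if s = t then (2 : ℝ) • c else 0) :
    ∑ s, ∑ t, (a s * a t) • f s t = (∑ s, a s ^ 2) • c := by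
  set S := ∑ s, ∑ t, (a s * a t) • f s t with hS
  have h2 : (2 : ℝ) • S = (2 : ℝ) • ((∑ s, a s ^ 2) • c) := by
    have hcomm : S = ∑ s, ∑ t, (a t * a s) • f t s := by
      rw [hS]; exact Finset.sum_comm
    calc (2 : ℝ) • S = S + S := (two_smul ℝ S)
      _ = (∑ s, ∑ t, (a s * a t) • f s t) + ∑ s, ∑ t, (a t * a s) • f t s := by
          rw [← hS, ← hcomm]
      _ = ∑ s, ∑ t, ((a s * a t) • f s t + (a t * a s) • f t s) := by
          rw [← Finset.sum_add_distrib]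
          exact Finset.sum_congr rfl fun s _ => by rw [← Finset.sum_add_distrib]
      _ = ∑ s, ∑ t, (a s * a t) • (if s = t then (2 : ℝ) • c else 0) := by
          refine Finset.sum_congr rfl fun s _ => Finset.sum_congr rfl fun t _ => ?_
          rw [mul_comm (a t), ← smul_add, hf]
      _ = ∑ s, (a s * a s) • ((2 : ℝ) • c) := by
          refine Finset.sum_congr rfl fun s _ => ?_
          rw [Finset.sum_eq_single s (fun t _ hts => by rw [if_neg (Ne.symm hts), smul_zero])
            (fun h => absurd (Finset.mem_univ s) h), if_pos rfl]
      _ = (2 : ℝ) • ((∑ s, a s ^ 2) • c) := by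
          rw [Finset.sum_smul]
          rw [Finset.smul_sum]
          refine Finset.sum_congr rfl fun s _ => ?_
          rw [smul_comm, sq]
  exact smul_right_injective E two_ne_zero h2

lemma HCAlg.mul_emb_conj (H : HCAlg 𝔸 m) (x : Fin (m + 1) → ℝ) :
    H.mul (embM H x) (H.conj (embM H x)) = (∑ s, x s ^ 2) • H.one := by
  have hexp : H.mul (embM H x) (H.conj (embM H x)) =
      ∑ s, ∑ t, (x s * x t) • H.mul (H.v s) (H.conj (H.v t)) := by
    simp only [embM, map_sum, _root_.map_smul, LinearMap.sum_apply, LinearMap.smul_apply,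
      Finset.smul_sum, smul_smul]
    rw [Finset.sum_comm]
    exact Finset.sum_congr rfl fun s _ => Finset.sum_congr rfl fun t _ => by rw [mul_comm]
  rw [hexp]
  exact sum_pair_aux x _ _ (H.pairL)

lemma HCAlg.mul_conj_emb (H : HCAlg 𝔸 m) (x : Fin (m + 1) → ℝ) :
    H.mul (H.conj (embM H x)) (embM H x) = (∑ s, x s ^ 2) • H.one := by
  have hexp : H.mul (H.conj (embM H x)) (embM H x) =
      ∑ s, ∑ t, (x s * x t) • H.mul (H.conj (H.v s)) (H.v t) := by
    simp only [embM, map_sum, _root_.map_smul, LinearMap.sum_apply, LinearMap.smul_apply,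
      Finset.smul_sum, smul_smul]
    rw [Finset.sum_comm]
    exact Finset.sum_congr rfl fun s _ => Finset.sum_congr rfl fun t _ => by rw [mul_comm]
  rw [hexp]
  exact sum_pair_aux x _ _ (H.pairR)

lemma HCAlg.sum_vconjv (H : HCAlg 𝔸 m) :
    ∑ s, H.mul (H.v s) (H.conj (H.v s)) = ((m : ℝ) + 1) • H.one := by
  rw [Finset.sum_congr rfl fun s _ => H.vconjv s, Finset.sum_const, Finset.card_univ,
    Fintype.card_fin]
  rw [show ((m : ℝ) + 1) = ((m + 1 : ℕ) : ℝ) by push_cast; ring, Nat.cast_smul_eq_nsmul]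

lemma HCAlg.sum_conjvv (H : HCAlg 𝔸 m) :
    ∑ s, H.mul (H.conj (H.v s)) (H.v s) = ((m : ℝ) + 1) • H.one := by
  rw [Finset.sum_congr rfl fun s _ => H.conjvv s, Finset.sum_const, Finset.card_univ,
    Fintype.card_fin]
  rw [show ((m : ℝ) + 1) = ((m + 1 : ℕ) : ℝ) by push_cast; ring, Nat.cast_smul_eq_nsmul]

/-- (Example 3.1): the Cauchy kernel `E(x) = σ_{m+1}⁻¹ x^c / |x|^{m+1}` is both left and
right monogenic on `M ∖ {0}`: `∑_s v_s (∂E/∂x_s) = 0` and `∑_s (∂E/∂x_s) v_s = 0`. -/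
theorem cauchy_kernel_monogenic (H : HCAlg 𝔸 m)
    (x : Fin (m + 1) → ℝ) (hx : x ≠ 0) :
    (∑ s, H.mul (H.v s) (pd1 (CauchyE H) s x)) = 0 ∧
    (∑ s, H.mul (pd1 (CauchyE H) s x) (H.v s)) = 0 := by
  classical
  set q : (Fin (m + 1) → ℝ) → ℝ := fun c => ∑ s, c s * c s with hqdef
  have hqsq : ∀ c : Fin (m + 1) → ℝ, q c = ∑ s, c s ^ 2 := by
    intro c; simp [hqdef, sq]
  have hqnonneg : ∀ c, 0 ≤ q c := fun c => by
    rw [hqsq]; exact Finset.sum_nonneg fun s _ => sq_nonneg _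
  have hqpos : 0 < q x := by
    obtain ⟨s, hs⟩ := Function.ne_iff.mp hx
    rw [hqsq]
    exact Finset.sum_pos' (fun t _ => sq_nonneg _) ⟨s, Finset.mem_univ s, by
        have hs' : x s ≠ 0 := by simpa using hs
        exact lt_of_le_of_ne (sq_nonneg _) (Ne.symm (pow_ne_zero 2 hs'))⟩
  set K : ℝ := usigma (m + 1) with hK
  set p : ℝ := -(((m : ℝ) + 1) / 2) with hp
  -- the Cauchy kernel rewritten with `rpow`
  have hCE : CauchyE H = fun c => (K⁻¹ * q c ^ p) • H.conj (embM H c) := by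
    funext c
    have h1 : enormM c ^ (m + 1) = q c ^ (((m : ℝ) + 1) / 2) := by
      rw [enormM, ← hqsq, Real.sqrt_eq_rpow,
        ← Real.rpow_natCast ((q c) ^ (1 / (2:ℝ))) (m + 1), ← Real.rpow_mul (hqnonneg c)]
      congr 1
      push_cast
      ring
    rw [CauchyE, h1, mul_inv, ← Real.rpow_neg (hqnonneg c), ← hp, ← hK]
  -- the (continuous) linear map `c ↦ conj (emb c)`
  let Llin : (Fin (m + 1) → ℝ) →ₗ[ℝ] 𝔸 :=
    { toFun := fun c => H.conj (embM H c)
      map_add' := fun a b => by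
        simp [embM, add_smul, Finset.sum_add_distrib]
      map_smul' := fun r a => by
        simp [embM, Finset.smul_sum, smul_smul] }
  let L : (Fin (m + 1) → ℝ) →L[ℝ] 𝔸 := Llin.toContinuousLinearMap
  -- derivative of `q`
  have hq : HasFDerivAt q (∑ s, ((2:ℝ) * x s) • (ContinuousLinearMap.proj s :
      (Fin (m + 1) → ℝ) →L[ℝ] ℝ)) x := by
    have h : ∀ s : Fin (m + 1), HasFDerivAt (fun c : Fin (m + 1) → ℝ => c s * c s)
        (((2:ℝ) * x s) • (ContinuousLinearMap.proj s : (Fin (m + 1) → ℝ) →L[ℝ] ℝ)) x := by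
      intro s
      have hproj := (ContinuousLinearMap.proj (R := ℝ)
        (φ := fun _ : Fin (m + 1) => ℝ) s).hasFDerivAt (x := x)
      have hmul := hproj.mul hproj
      exact hmul.congr_fderiv (by rw [two_mul, add_smul]; rfl)
    exact HasFDerivAt.fun_sum (fun s _ => h s)
  set Q : (Fin (m + 1) → ℝ) →L[ℝ] ℝ := ∑ s, ((2:ℝ) * x s) • (ContinuousLinearMap.proj s :
      (Fin (m + 1) → ℝ) →L[ℝ] ℝ) with hQ
  have hF : HasFDerivAt (fun c => q c ^ p) ((p * q x ^ (p - 1)) • Q) x :=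
    hq.rpow_const (Or.inl hqpos.ne')
  have hg : HasFDerivAt (fun c => K⁻¹ * q c ^ p) (K⁻¹ • ((p * q x ^ (p - 1)) • Q)) x :=
    hF.const_mul K⁻¹
  have hE : HasFDerivAt (CauchyE H)
      ((K⁻¹ * q x ^ p) • L + (K⁻¹ • ((p * q x ^ (p - 1)) • Q)).smulRight (L x)) x := by
    rw [hCE]
    exact hg.smul L.hasFDerivAt
  have hQs : ∀ s, Q (Pi.single s 1) = 2 * x s := by
    intro s
    simp only [hQ, ContinuousLinearMap.sum_apply, ContinuousLinearMap.smul_apply,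
      ContinuousLinearMap.proj_apply, Pi.single_apply, smul_eq_mul, mul_ite, mul_one, mul_zero]
    simp
  have hLs : ∀ s, L (Pi.single s 1) = H.conj (H.v s) := by
    intro s
    show H.conj (embM H (Pi.single s 1)) = H.conj (H.v s)
    congr 1
    simp only [embM, Pi.single_apply, ite_smul, one_smul, zero_smul]
    simp
  have hLx : L x = H.conj (embM H x) := rfl
  have hpd : ∀ s, pd1 (CauchyE H) s x =
      (K⁻¹ * q x ^ p) • H.conj (H.v s) +
      (K⁻¹ * (p * q x ^ (p - 1)) * 2 * x s) • H.conj (embM H x) := by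
    intro s
    rw [pd1, hE.fderiv]
    rw [ContinuousLinearMap.add_apply, ContinuousLinearMap.smul_apply,
      ContinuousLinearMap.smulRight_apply, ContinuousLinearMap.smul_apply,
      ContinuousLinearMap.smul_apply, hQs s, hLs s, hLx]
    simp only [smul_eq_mul, smul_smul]
    congr 2
    ring
  have hcoef : (K⁻¹ * q x ^ p) * ((m : ℝ) + 1) + (K⁻¹ * (p * q x ^ (p - 1)) * 2) * q x = 0 := by
    have hqq : q x ^ (p - 1) * q x = q x ^ p := by
      rw [Real.rpow_sub hqpos, Real.rpow_one, div_mul_cancel₀ _ hqpos.ne']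
    rw [hp] at hqq ⊢
    linear_combination (K⁻¹ * (-(((m : ℝ) + 1) / 2)) * 2) * hqq
  constructor
  · have hsplit : ∑ s, H.mul (H.v s) (pd1 (CauchyE H) s x)
        = (K⁻¹ * q x ^ p) • (∑ s, H.mul (H.v s) (H.conj (H.v s)))
          + (K⁻¹ * (p * q x ^ (p - 1)) * 2) •
              (∑ s, x s • H.mul (H.v s) (H.conj (embM H x))) := by
      rw [Finset.smul_sum, Finset.smul_sum, ← Finset.sum_add_distrib]
      refine Finset.sum_congr rfl fun s _ => ?_
      rw [hpd s]
      simp only [map_add, _root_.map_smul, LinearMap.add_apply, LinearMap.smul_apply, smul_smul]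
    have hemb : ∑ s, x s • H.mul (H.v s) (H.conj (embM H x))
        = H.mul (embM H x) (H.conj (embM H x)) := by
      have hml : H.mul (embM H x) = ∑ s, x s • H.mul (H.v s) := by
        rw [embM, map_sum]
        exact Finset.sum_congr rfl fun s _ => _root_.map_smul _ _ _
      rw [hml, LinearMap.sum_apply]
      exact Finset.sum_congr rfl fun s _ => rfl
    rw [hsplit, hemb, H.sum_vconjv, H.mul_emb_conj, ← hqsq, smul_smul, smul_smul,
      ← add_smul, hcoef, zero_smul]
  · have hsplit : ∑ s, H.mul (pd1 (CauchyE H) s x) (H.v s)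
        = (K⁻¹ * q x ^ p) • (∑ s, H.mul (H.conj (H.v s)) (H.v s))
          + (K⁻¹ * (p * q x ^ (p - 1)) * 2) •
              (∑ s, x s • H.mul (H.conj (embM H x)) (H.v s)) := by
      rw [Finset.smul_sum, Finset.smul_sum, ← Finset.sum_add_distrib]
      refine Finset.sum_congr rfl fun s _ => ?_
      rw [hpd s]
      simp only [map_add, _root_.map_smul, LinearMap.add_apply, LinearMap.smul_apply, smul_smul]
    have hemb : ∑ s, x s • H.mul (H.conj (embM H x)) (H.v s)
        = H.mul (H.conj (embM H x)) (embM H x) := by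
      set c := H.conj (embM H x) with hc
      rw [embM, map_sum]
      exact Finset.sum_congr rfl fun s _ => (_root_.map_smul _ _ _).symm
    rw [hsplit, hemb, H.sum_conjvv, H.mul_conj_emb, ← hqsq, smul_smul, smul_smul,
      ← add_smul, hcoef, zero_smul]

end
end

section
/- Let Ω be a domain in M^n ≅ ℝ^{(m+1)n} and fix j ∈ {1, …, n}. Let φ = ∑_{s=0}^m φ_s v_s ∈ C¹(Ω, M) with real-valued component functions φ_s satisfying the symmetry condition ∂φ_t/∂x_{j,s} = ∂φ_s/∂x_{j,t} on Ω for all 1 ≤ s ≤ m and 1 ≤ t ≤ m − 1. Then for every a ∈ 𝔸 and every point of Ω, ∑_{s=1}^m [v_s, ∂̄_j φ_s, a] = 0, where [a,b,c] := (ab)c − a(bc) is the associator. -/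
open MeasureTheory

noncomputable section

variable {𝔸 : Type} [NormedAddCommGroup 𝔸] [NormedSpace ℝ 𝔸] {m n : ℕ}

/-- (Lemma 3.2): if `φ = ∑_s φ_s v_s ∈ C¹(Ω, M)` satisfies the symmetry condition
`∂φ_t/∂x_{j,s} = ∂φ_s/∂x_{j,t}` for `1 ≤ s ≤ m`, `1 ≤ t ≤ m − 1`, then for every `a ∈ 𝔸`
and every point of `Ω`, `∑_{s=1}^m [v_s, ∂̄_j φ_s, a] = 0`, where
`[a,b,c] = (ab)c − a(bc)` is the associator. -/
theorem associator_sum_vanishes (H : HCAlg 𝔸 m)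
    (Ω : Set (Mn n m)) (hΩo : IsOpen Ω) (hΩc : IsConnected Ω) (j : Fin n)
    (φ : Fin (m + 1) → Mn n m → ℝ) (hφ : ∀ s, ContDiffOn ℝ 1 (φ s) Ω)
    (hsym : ∀ s t : Fin (m + 1), s ≠ 0 → t ≠ 0 → (t : ℕ) < m →
      ∀ x ∈ Ω, pd (φ t) j s x = pd (φ s) j t x)
    (a : 𝔸) (x : Mn n m) (hx : x ∈ Ω) :
    ∑ s ∈ Finset.univ.filter (fun s : Fin (m + 1) => s ≠ 0),
      (H.mul (H.mul (H.v s) (∑ t, pd (φ s) j t x • H.v t)) a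
        - H.mul (H.v s) (H.mul (∑ t, pd (φ s) j t x • H.v t) a)) = 0 := by
  classical
  set A : 𝔸 → 𝔸 → 𝔸 → 𝔸 := fun a b c => H.mul (H.mul a b) c - H.mul a (H.mul b c) with hA
  have hAaa : ∀ a c, A a a c = 0 := by
    intro a c; simp [hA, H.alt_left]
  have hAswap : ∀ a b c, A a b c = - A b a c := by
    intro a b c
    have key : A (a + b) (a + b) c = A a a c + (A a b c + A b a c) + A b b c := by
      simp only [hA, map_add, LinearMap.add_apply]; abel
    rw [hAaa, hAaa, hAaa, zero_add, add_zero] at key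
    exact eq_neg_of_add_eq_zero_left key.symm
  have h0 : ∀ s', A (H.v s') H.one a = 0 := by
    intro s'; simp [hA, H.mul_one', H.one_mul']
  have expand : ∀ s : Fin (m + 1),
      (H.mul (H.mul (H.v s) (∑ t, pd (φ s) j t x • H.v t)) a
        - H.mul (H.v s) (H.mul (∑ t, pd (φ s) j t x • H.v t) a))
      = ∑ t ∈ Finset.univ.filter (fun t : Fin (m + 1) => t ≠ 0),
          pd (φ s) j t x • A (H.v s) (H.v t) a := by
    intro s
    have e1 : (H.mul (H.mul (H.v s) (∑ t, pd (φ s) j t x • H.v t)) a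
        - H.mul (H.v s) (H.mul (∑ t, pd (φ s) j t x • H.v t) a))
        = ∑ t, pd (φ s) j t x • A (H.v s) (H.v t) a := by
      simp only [hA, map_sum, _root_.map_smul, LinearMap.map_smul, LinearMap.sum_apply, LinearMap.smul_apply,
        smul_sub, Finset.sum_sub_distrib]
    rw [e1]
    refine (Finset.sum_filter_of_ne ?_).symm
    intro t _ ht
    by_contra h
    apply ht
    rw [h, H.v_zero, h0, smul_zero]
  rw [Finset.sum_congr rfl (fun s _ => expand s)]
  set P := Finset.univ.filter (fun s : Fin (m + 1) => s ≠ 0) with hP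
  set F : Fin (m + 1) → Fin (m + 1) → 𝔸 :=
    fun s t => pd (φ s) j t x • A (H.v s) (H.v t) a with hF
  have hanti : ∀ s ∈ P, ∀ t ∈ P, F s t = - F t s := by
    intro s hs t ht
    simp only [hP, Finset.mem_filter] at hs ht
    rcases eq_or_ne s t with rfl | hst
    · simp [hF, hAaa]
    · have hc : pd (φ s) j t x = pd (φ t) j s x := by
        have hv : (s : ℕ) ≠ (t : ℕ) := fun h => hst (Fin.ext h)
        have hsle : (s : ℕ) ≤ m := Nat.lt_succ_iff.mp s.isLt
        have htle : (t : ℕ) ≤ m := Nat.lt_succ_iff.mp t.isLt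
        rcases lt_or_ge (t : ℕ) m with htm | htm
        · exact (hsym s t hs.2 ht.2 htm x hx).symm
        · have hsm : (s : ℕ) < m := by omega
          exact hsym t s ht.2 hs.2 hsm x hx
      rw [hF]
      simp only [hc, hAswap (H.v s) (H.v t) a, smul_neg]
  have hsum : (∑ s ∈ P, ∑ t ∈ P, F s t) = - ∑ s ∈ P, ∑ t ∈ P, F s t := by
    calc (∑ s ∈ P, ∑ t ∈ P, F s t) = ∑ t ∈ P, ∑ s ∈ P, F s t := Finset.sum_comm
      _ = ∑ t ∈ P, ∑ s ∈ P, (- F t s) := by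
          refine Finset.sum_congr rfl fun t ht => Finset.sum_congr rfl fun s hs => ?_
          exact hanti s hs t ht
      _ = - ∑ s ∈ P, ∑ t ∈ P, F s t := by simp [Finset.sum_neg_distrib]
  have h2 : (∑ s ∈ P, ∑ t ∈ P, F s t) + (∑ s ∈ P, ∑ t ∈ P, F s t) = 0 := by
    nth_rewrite 2 [hsum]; simp
  have := (two_smul ℝ (∑ s ∈ P, ∑ t ∈ P, F s t)) ▸ h2
  have hz : (∑ s ∈ P, ∑ t ∈ P, F s t) = 0 := by
    have := smul_eq_zero.mp this
    rcases this with h | h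
    · norm_num at h
    · exact h
  exact hz

end
end

section
/- For every x ∈ M^n, every y ∈ M^n ∖ {x}, and every j ∈ {1, …, n}, the Bochner–Martinelli kernel component satisfies ∂̄_{y_j} K_j(y − x) = ((m+1)/σ_{(m+1)n}) ( 1/|y − x|^{(m+1)n} − n |y_j − x_j|² / |y − x|^{(m+1)n + 2} ), where ∂̄_{y_j} = ∑_{s=0}^m v_s ∂/∂y_{j,s}. -/
open MeasureTheory

noncomputable section

variable {𝔸 : Type} [NormedAddCommGroup 𝔸] [NormedSpace ℝ 𝔸] {m n : ℕ}

/-! ### Auxiliary lemmas -/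

namespace HCAlg

lemma conj_v_ne (H : HCAlg 𝔸 m) {s : Fin (m+1)} (hs : s ≠ 0) : H.conj (H.v s) = -(H.v s) :=
  eq_neg_of_add_eq_zero_right (H.v_trace s hs)

lemma mul_v_conj_self (H : HCAlg 𝔸 m) (s : Fin (m+1)) :
    H.mul (H.v s) (H.conj (H.v s)) = H.one := by
  rcases eq_or_ne s 0 with rfl | hs
  · rw [H.v_zero, H.conj_one, H.one_mul']
  · exact H.v_norm s hs

lemma mul_v_conj_antisymm (H : HCAlg 𝔸 m) {s t : Fin (m+1)} (hst : s ≠ t) :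
    H.mul (H.v s) (H.conj (H.v t)) = -(H.mul (H.v t) (H.conj (H.v s))) := by
  rcases eq_or_ne s 0 with rfl | hs
  · have ht : t ≠ 0 := fun h => hst h.symm
    rw [H.v_zero, H.one_mul', H.conj_one, H.mul_one', H.conj_v_ne ht]
  · rcases eq_or_ne t 0 with rfl | ht
    · rw [H.v_zero, H.conj_one, H.mul_one', H.one_mul', H.conj_v_ne hs]
      simp
    · rw [H.conj_v_ne ht, H.conj_v_ne hs]
      simp only [map_neg, LinearMap.neg_apply]
      rw [H.v_anticomm s t hs ht hst]

lemma sum_mul_v_conj (H : HCAlg 𝔸 m) :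
    ∑ s, H.mul (H.v s) (H.conj (H.v s)) = ((m : ℝ) + 1) • H.one := by
  have h : ∀ s : Fin (m+1), H.mul (H.v s) (H.conj (H.v s)) = H.one := H.mul_v_conj_self
  rw [Finset.sum_congr rfl fun s _ => h s, Finset.sum_const, Finset.card_univ,
    Fintype.card_fin]
  rw [← Nat.cast_smul_eq_nsmul ℝ]
  push_cast
  ring_nf

lemma mul_embM_conj (H : HCAlg 𝔸 m) (c : Fin (m + 1) → ℝ) :
    H.mul (embM H c) (H.conj (embM H c)) = (∑ s, c s ^ 2) • H.one := by
  have expand : H.mul (embM H c) (H.conj (embM H c)) =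
      ∑ s, ∑ t, (c s * c t) • H.mul (H.v s) (H.conj (H.v t)) := by
    unfold embM
    rw [map_sum, map_sum, LinearMap.sum_apply]
    refine Finset.sum_congr rfl fun s _ => ?_
    rw [_root_.map_smul, LinearMap.smul_apply, map_sum]
    rw [Finset.smul_sum]
    refine Finset.sum_congr rfl fun t _ => ?_
    simp [smul_smul]
  set S := H.mul (embM H c) (H.conj (embM H c)) with hS
  have h2 : S + S = ((2:ℝ) * ∑ s, c s ^ 2) • H.one := by
    nth_rewrite 2 [expand]
    nth_rewrite 1 [expand]
    nth_rewrite 1 [Finset.sum_comm]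
    rw [← Finset.sum_add_distrib]
    have h1 : ∀ s : Fin (m+1), (∑ t, (c t * c s) • H.mul (H.v t) (H.conj (H.v s)))
        + (∑ t, (c s * c t) • H.mul (H.v s) (H.conj (H.v t)))
        = (2 * c s ^ 2) • H.one := by
      intro s
      rw [← Finset.sum_add_distrib]
      rw [Finset.sum_eq_single s]
      · rw [H.mul_v_conj_self]
        have hcc : c s * c s = c s ^ 2 := by ring
        rw [hcc, ← add_smul, two_mul]
      · intro t _ hts
        rw [H.mul_v_conj_antisymm hts, mul_comm (c s) (c t), smul_neg]
        abel
      · intro h; exact absurd (Finset.mem_univ s) h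
    rw [Finset.sum_congr rfl fun s _ => h1 s, ← Finset.sum_smul, ← Finset.mul_sum]
  have key : (2:ℝ) • S = ((2:ℝ) * ∑ s, c s ^ 2) • H.one := by
    rw [two_smul]; exact h2
  have key2 := congrArg (fun z => (2:ℝ)⁻¹ • z) key
  simpa [smul_smul, mul_assoc] using key2

end HCAlg

/-- coordinate projection as a continuous linear map -/
def pij (j : Fin n) (s : Fin (m + 1)) : Mn n m →L[ℝ] ℝ :=
  (ContinuousLinearMap.proj (R := ℝ) (φ := fun _ : Fin (m+1) => ℝ) s).comp
    (ContinuousLinearMap.proj (R := ℝ) (φ := fun _ : Fin n => Fin (m+1) → ℝ) j)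

@[simp] lemma pij_apply (j : Fin n) (s : Fin (m + 1)) (z : Mn n m) : pij j s z = z j s := rfl

/-- derivative of the squared norm -/
def Lq (w : Mn n m) : Mn n m →L[ℝ] ℝ := ∑ j, ∑ s, (2 * w j s) • pij j s

lemma hasFDerivAt_q (w : Mn n m) :
    HasFDerivAt (fun z : Mn n m => ∑ j, ∑ s, z j s ^ 2) (Lq w) w := by
  apply HasFDerivAt.fun_sum
  intro j _
  apply HasFDerivAt.fun_sum
  intro s _
  have h := (hasDerivAt_pow 2 (w j s)).comp_hasFDerivAt w ((pij j s).hasFDerivAt (x := w))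
  refine h.congr_fderiv ?_
  norm_num

lemma Lq_single (w : Mn n m) (j : Fin n) (s : Fin (m + 1)) :
    Lq w (Pi.single j (Pi.single s 1)) = 2 * w j s := by
  simp only [Lq, ContinuousLinearMap.coe_sum', Finset.sum_apply,
    ContinuousLinearMap.coe_smul', Pi.smul_apply, pij_apply, smul_eq_mul]
  rw [Finset.sum_eq_single j]
  · rw [Finset.sum_eq_single s]
    · simp
    · intro t _ hts; simp [Pi.single_apply, hts]
    · simp
  · intro i _ hij
    simp [Pi.single_apply, hij]
  · simp

/-- derivative of `z ↦ conj (embM (z j))` -/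
def LbK (H : HCAlg 𝔸 m) (j : Fin n) : Mn n m →L[ℝ] 𝔸 :=
  ∑ s, (pij j s).smulRight (H.conj (H.v s))

lemma LbK_apply (H : HCAlg 𝔸 m) (j : Fin n) (z : Mn n m) :
    LbK H j z = H.conj (embM H (z j)) := by
  simp [LbK, embM, map_sum, _root_.map_smul]

lemma LbK_single (H : HCAlg 𝔸 m) (j : Fin n) (s : Fin (m + 1)) :
    LbK H j (Pi.single j (Pi.single s 1)) = H.conj (H.v s) := by
  simp only [LbK, ContinuousLinearMap.coe_sum', Finset.sum_apply,
    ContinuousLinearMap.smulRight_apply, pij_apply]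
  rw [Finset.sum_eq_single s]
  · simp
  · intro t _ hts; simp [Pi.single_apply, hts]
  · simp

lemma qpos {z : Mn n m} (hz : z ≠ 0) : 0 < ∑ j', ∑ s, z j' s ^ 2 := by
  obtain ⟨j₀, hj₀⟩ := Function.ne_iff.mp hz
  obtain ⟨s₀, hs₀⟩ := Function.ne_iff.mp hj₀
  have h1 : (0:ℝ) < ∑ s, z j₀ s ^ 2 := by
    have : (0:ℝ) < z j₀ s₀ ^ 2 := by
      have : z j₀ s₀ ≠ 0 := hs₀
      positivity
    refine lt_of_lt_of_le this ?_
    exact Finset.single_le_sum (fun t _ => sq_nonneg (z j₀ t)) (Finset.mem_univ s₀)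
  refine lt_of_lt_of_le h1 ?_
  exact Finset.single_le_sum (fun j' _ => Finset.sum_nonneg fun t _ => sq_nonneg (z j' t))
    (Finset.mem_univ j₀)

lemma usigma_pos {N : ℕ} (hN : 0 < N) : 0 < usigma N := by
  unfold usigma
  have h1 : (0:ℝ) < (N : ℝ) / 2 := by positivity
  exact div_pos (by positivity) (Real.Gamma_pos_of_pos h1)

lemma enormMn_pow_eq {z : Mn n m} (N : ℕ) :
    enormMn z ^ N = (∑ j', ∑ s, z j' s ^ 2) ^ ((N : ℝ) / 2) := by
  have hQ : (0:ℝ) ≤ ∑ j', ∑ s, z j' s ^ 2 :=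
    Finset.sum_nonneg fun j' _ => Finset.sum_nonneg fun t _ => sq_nonneg (z j' t)
  rw [enormMn, Real.sqrt_eq_rpow, ← Real.rpow_natCast (_ ^ (1/2 : ℝ)) N,
    ← Real.rpow_mul hQ]
  norm_num
  rw [show (1/2 : ℝ) * (N : ℝ) = (N : ℝ) / 2 by ring]

lemma Kker_coeff_eq (N : ℕ) (z : Mn n m) :
    (usigma N * enormMn z ^ N)⁻¹ =
      (usigma N)⁻¹ * (∑ j', ∑ s, z j' s ^ 2) ^ (-(N : ℝ) / 2) := by
  have hQ : (0:ℝ) ≤ ∑ j', ∑ s, z j' s ^ 2 :=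
    Finset.sum_nonneg fun j' _ => Finset.sum_nonneg fun t _ => sq_nonneg (z j' t)
  rw [mul_inv, enormMn_pow_eq, neg_div, Real.rpow_neg hQ]

lemma hasFDerivAt_Kker (H : HCAlg 𝔸 m) (j : Fin n) (w : Mn n m)
    (hw : 0 < ∑ j', ∑ s, w j' s ^ 2) :
    HasFDerivAt (Kker H n j)
      (((usigma ((m+1)*n))⁻¹ * (∑ j', ∑ s, w j' s ^ 2) ^ (-(((m+1)*n : ℕ) : ℝ) / 2)) • LbK H j
        + ((usigma ((m+1)*n))⁻¹ •
            ((-(((m+1)*n : ℕ) : ℝ) / 2 *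
              (∑ j', ∑ s, w j' s ^ 2) ^ (-(((m+1)*n : ℕ) : ℝ) / 2 - 1)) • Lq w)).smulRight
          (H.conj (embM H (w j)))) w := by
  have hq := hasFDerivAt_q w
  have hh : HasFDerivAt
      (fun z : Mn n m => (usigma ((m+1)*n))⁻¹ *
        (∑ j', ∑ s, z j' s ^ 2) ^ (-(((m+1)*n : ℕ) : ℝ) / 2))
      ((usigma ((m+1)*n))⁻¹ •
        ((-(((m+1)*n : ℕ) : ℝ) / 2 *
          (∑ j', ∑ s, w j' s ^ 2) ^ (-(((m+1)*n : ℕ) : ℝ) / 2 - 1)) • Lq w)) w :=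
    (hq.rpow_const (Or.inl hw.ne')).const_mul _
  have hB : HasFDerivAt (fun z : Mn n m => H.conj (embM H (z j))) (LbK H j) w := by
    have hfe : (fun z : Mn n m => H.conj (embM H (z j))) = LbK H j :=
      funext fun z => (LbK_apply H j z).symm
    rw [hfe]
    exact (LbK H j).hasFDerivAt
  have hKfun : Kker H n j = fun z : Mn n m =>
      ((usigma ((m+1)*n))⁻¹ *
        (∑ j', ∑ s, z j' s ^ 2) ^ (-(((m+1)*n : ℕ) : ℝ) / 2)) •
        H.conj (embM H (z j)) := by
    funext z
    rw [Kker, Kker_coeff_eq]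
  rw [hKfun]
  exact hh.smul hB


lemma mul_embM_left (H : HCAlg 𝔸 m) (c : Fin (m+1) → ℝ) (b : 𝔸) :
    H.mul (embM H c) b = ∑ s, c s • H.mul (H.v s) b := by
  rw [embM, map_sum, LinearMap.sum_apply]
  exact Finset.sum_congr rfl fun s _ => by rw [_root_.map_smul, LinearMap.smul_apply]

/-- (Computation in Lemma 3.3): for `y ≠ x` and each `j`,
`∂̄_{y_j} K_j(y − x) = ((m+1)/σ_{(m+1)n}) (1/|y−x|^{(m+1)n} − n|y_j−x_j|²/|y−x|^{(m+1)n+2})`,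
a real multiple of the unity of `𝔸`. -/
theorem dbar_Kj_formula (H : HCAlg 𝔸 m)
    (j : Fin n) (x y : Mn n m) (hyx : y ≠ x) :
    dbar H (fun z => Kker H n j (z - x)) j y =
      (((m + 1 : ℝ) / usigma ((m + 1) * n)) *
        (1 / enormMn (y - x) ^ ((m + 1) * n) -
          (n : ℝ) * enormM ((y - x) j) ^ 2 / enormMn (y - x) ^ ((m + 1) * n + 2))) • H.one := by
  have hn : 0 < n := j.pos
  have hNpos : 0 < (m+1)*n := Nat.mul_pos (Nat.succ_pos m) hn
  have hσ : 0 < usigma ((m+1)*n) := usigma_pos hNpos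
  have hwne : y - x ≠ 0 := sub_ne_zero.mpr hyx
  have hw : 0 < ∑ j', ∑ s, (y - x) j' s ^ 2 := qpos hwne
  set σ1 : ℝ := usigma ((m+1)*n) with hσdef
  set Q : ℝ := ∑ j', ∑ s, (y - x) j' s ^ 2 with hQdef
  set p : ℝ := -(((m+1)*n : ℕ) : ℝ) / 2 with hpdef
  have hK := hasFDerivAt_Kker H j (y - x) hw
  have hsub : HasFDerivAt (fun z : Mn n m => z - x) (ContinuousLinearMap.id ℝ (Mn n m)) y :=
    (hasFDerivAt_id y).sub_const x
  have hcomp' : HasFDerivAt (fun z => Kker H n j (z - x))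
      (((σ1⁻¹ * Q ^ p) • LbK H j
        + (σ1⁻¹ • ((p * Q ^ (p - 1)) • Lq (y - x))).smulRight
            (H.conj (embM H ((y - x) j)))).comp (ContinuousLinearMap.id ℝ (Mn n m))) y :=
    by have := hK.comp y hsub; exact this
  have hpd : ∀ s : Fin (m+1), pd (fun z => Kker H n j (z - x)) j s y =
      (σ1⁻¹ * Q ^ p) • H.conj (H.v s)
      + ((σ1⁻¹ * (p * Q ^ (p - 1)) * 2) * (y - x) j s) • H.conj (embM H ((y - x) j)) := by
    intro s
    rw [pd, hcomp'.fderiv]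
    simp only [ContinuousLinearMap.coe_comp', Function.comp_apply,
      ContinuousLinearMap.coe_id', id_eq, ContinuousLinearMap.add_apply,
      ContinuousLinearMap.coe_smul', Pi.smul_apply, ContinuousLinearMap.smulRight_apply]
    rw [LbK_single, Lq_single]
    simp only [smul_eq_mul, smul_smul]
    congr 1
    congr 1
    ring
  have hterm : ∀ s : Fin (m+1), H.mul (H.v s) (pd (fun z => Kker H n j (z - x)) j s y)
      = (σ1⁻¹ * Q ^ p) • H.mul (H.v s) (H.conj (H.v s))
        + ((σ1⁻¹ * (p * Q ^ (p - 1)) * 2) * (y - x) j s) •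
            H.mul (H.v s) (H.conj (embM H ((y - x) j))) := by
    intro s
    rw [hpd s, map_add, _root_.map_smul, _root_.map_smul]
  rw [dbar, Finset.sum_congr rfl fun s _ => hterm s, Finset.sum_add_distrib,
    ← Finset.smul_sum, H.sum_mul_v_conj]
  have hsum2 : (∑ s, ((σ1⁻¹ * (p * Q ^ (p - 1)) * 2) * (y - x) j s) •
          H.mul (H.v s) (H.conj (embM H ((y - x) j))))
      = ((σ1⁻¹ * (p * Q ^ (p - 1)) * 2) * ∑ s, (y - x) j s ^ 2) • H.one := by
    rw [Finset.sum_congr rfl fun s _ =>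
        mul_smul (σ1⁻¹ * (p * Q ^ (p - 1)) * 2) ((y - x) j s)
          (H.mul (H.v s) (H.conj (embM H ((y - x) j)))),
      ← Finset.smul_sum, ← mul_embM_left, H.mul_embM_conj, smul_smul]
  rw [hsum2, smul_smul, ← add_smul]
  congr 1
  -- scalar identity
  have hQ0 : (0:ℝ) ≤ Q := hw.le
  have hQ1 : enormM ((y - x) j) ^ 2 = ∑ s, (y - x) j s ^ 2 := by
    rw [enormM, Real.sq_sqrt (Finset.sum_nonneg fun t _ => sq_nonneg _)]
  rw [hQ1, enormMn_pow_eq ((m+1)*n), enormMn_pow_eq ((m+1)*n + 2), ← hQdef]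
  rw [show ((((m+1)*n + 2 : ℕ)) : ℝ)/2 = ((((m+1)*n : ℕ)) : ℝ)/2 + 1 by push_cast; ring,
    Real.rpow_add hw, Real.rpow_one]
  rw [show p = -(((((m+1)*n : ℕ)) : ℝ)/2) by rw [hpdef]; ring]
  rw [Real.rpow_sub hw, Real.rpow_neg hQ0, Real.rpow_one]
  have hu : Q ^ (((((m+1)*n : ℕ)) : ℝ)/2) ≠ 0 := (Real.rpow_pos_of_pos hw _).ne'
  have hQne : Q ≠ 0 := hw.ne'
  have hσne : σ1 ≠ 0 := hσ.ne'
  field_simp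
  push_cast
  ring

end
end
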